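/- Let θ₀ ∈ [0,2π), τ₀ > 0 and n ≥ 1 be the parameters of a discrete helical lattice H₀ with reciprocal lattice H₀', and let U = {(s·(2π/n) + t·θ₀, t·τ₀) : s, t ∈ [0,1)} ⊂ ℝ² be the corresponding unit cell in the (φ, z)-variables. Fix r > 0 and let ψ : [0,2π) × ℝ → ℂ be continuous with Σ_{(θ,τ) ∈ H₀} ∫₀^{2π} ∫_ℝ |ψ((φ − θ) mod 2π, z − τ)| dz dφ < ∞, and define ρ(φ, z) = Σ_{(θ,τ) ∈ H₀} ψ((φ − θ) mod 2π, z − τ) for (φ, z) ∈ [0,2π) × ℝ, extended 2π-periodically in φ to all of ℝ × ℝ. Then for every (α, β) ∈ H₀': ∫₀^{2π} ∫_ℝ ψ(φ, z) e^{−i(αφ + βz)} dz dφ = ∫∫_U ρ(φ, z) e^{−i(αφ + βz)} dz dφ. In particular the left-hand side does not depend on the choice of ψ representing ρ. -/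

import Mathlib

noncomputable section

open Real

/-- Reduction of a real number modulo 2π into [0, 2π). -/
def mod2pi (x : ℝ) : ℝ := x - 2*Real.pi * ⌊x / (2*Real.pi)⌋

/-- The discrete helical lattice with parameters θ₀, τ₀, n:
`H₀ = {((2πi/n + θ₀ j) mod 2π, τ₀ j) : i ∈ {0,…,n−1}, j ∈ ℤ} ⊂ [0,2π) × ℝ`. -/
def helLat (θ₀ τ₀ : ℝ) (n : ℕ) : Set (ℝ × ℝ) :=
  {p | ∃ i j : ℤ, 0 ≤ i ∧ i < (n : ℤ) ∧
    p = (mod2pi (2*Real.pi*i/n + θ₀*j), τ₀*j)}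

/-- The reciprocal helical lattice:
`H₀' = {(α,β) ∈ ℤ × ℝ : αθ + βτ ∈ 2πℤ for all (θ,τ) ∈ H₀}`. -/
def helRec (θ₀ τ₀ : ℝ) (n : ℕ) : Set (ℤ × ℝ) :=
  {q | ∀ p ∈ helLat θ₀ τ₀ n, ∃ m : ℤ, (q.1 : ℝ) * p.1 + q.2 * p.2 = 2*Real.pi*m}

open MeasureTheory

/-- The unit cell of the helical lattice in the (φ, z)-variables. -/
def Ucell (θ₀ τ₀ : ℝ) (n : ℕ) : Set (ℝ × ℝ) :=
  {p | ∃ s t : ℝ, s ∈ Set.Ico (0:ℝ) 1 ∧ t ∈ Set.Ico (0:ℝ) 1 ∧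
    p = (s * (2*Real.pi/n) + t * θ₀, t * τ₀)}

/-! ### Auxiliary lemmas about `mod2pi` -/

lemma mod2pi_eq_fract (x : ℝ) : mod2pi x = 2*Real.pi * Int.fract (x/(2*Real.pi)) := by
  unfold mod2pi Int.fract
  have h : (2*Real.pi) ≠ 0 := Real.two_pi_pos.ne'
  field_simp

lemma mod2pi_mem (x : ℝ) : mod2pi x ∈ Set.Ico 0 (2*Real.pi) := by
  rw [mod2pi_eq_fract]
  constructor
  · have := Int.fract_nonneg (x/(2*Real.pi))
    nlinarith [Real.two_pi_pos]
  · have := Int.fract_lt_one (x/(2*Real.pi))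
    nlinarith [Real.two_pi_pos]

lemma mod2pi_add_int_mul (x : ℝ) (k : ℤ) : mod2pi (x + 2*Real.pi*k) = mod2pi x := by
  rw [mod2pi_eq_fract, mod2pi_eq_fract]
  have h : (x + 2*Real.pi*k)/(2*Real.pi) = x/(2*Real.pi) + k := by
    field_simp
  rw [h, Int.fract_add_intCast]

lemma mod2pi_eq_self {x : ℝ} (hx : x ∈ Set.Ico 0 (2*Real.pi)) : mod2pi x = x := by
  rw [mod2pi_eq_fract]
  have h1 : x / (2*Real.pi) ∈ Set.Ico (0:ℝ) 1 := by
    constructor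
    · exact div_nonneg hx.1 Real.two_pi_pos.le
    · rw [div_lt_one Real.two_pi_pos]; exact hx.2
  rw [Int.fract_eq_self.2 h1]
  field_simp

lemma mod2pi_sub_exists (x : ℝ) : ∃ k : ℤ, mod2pi x = x + 2*Real.pi*k :=
  ⟨-⌊x / (2*Real.pi)⌋, by unfold mod2pi; push_cast; ring⟩

lemma mod2pi_eq_imp {a b : ℝ} (h : mod2pi a = mod2pi b) : ∃ k : ℤ, a - b = 2*Real.pi*k := by
  refine ⟨⌊a/(2*Real.pi)⌋ - ⌊b/(2*Real.pi)⌋, ?_⟩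
  unfold mod2pi at h
  push_cast
  linarith [h]

lemma mod2pi_sub_congr (x y : ℝ) : mod2pi (x - mod2pi y) = mod2pi (x - y) := by
  obtain ⟨k, hk⟩ := mod2pi_sub_exists y
  have : x - mod2pi y = (x - y) + 2*Real.pi*((-k : ℤ):ℝ) := by rw [hk]; push_cast; ring
  rw [this, mod2pi_add_int_mul]

/-! ### A parametrization of the helical lattice -/

def latf (θ₀ τ₀ : ℝ) (n : ℕ) (hτ₀ : 0 < τ₀) (hn : 1 ≤ n) :
    Fin n × ℤ → helLat θ₀ τ₀ n := fun p =>
  ⟨(mod2pi (2*Real.pi*(p.1 : ℤ)/n + θ₀*p.2), τ₀*p.2),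
    ⟨(p.1 : ℤ), p.2, Int.ofNat_nonneg _, by exact_mod_cast p.1.2, rfl⟩⟩

lemma latf_bij (θ₀ τ₀ : ℝ) (n : ℕ) (hτ₀ : 0 < τ₀) (hn : 1 ≤ n) :
    Function.Bijective (latf θ₀ τ₀ n hτ₀ hn) := by
  constructor
  · rintro ⟨i, j⟩ ⟨i', j'⟩ h
    have h' := congrArg Subtype.val h
    have h1 := congrArg Prod.fst h'
    have h2 := congrArg Prod.snd h'
    simp only [latf] at h1 h2
    have hj : j = j' := by
      have := mul_left_cancel₀ hτ₀.ne' (by exact_mod_cast h2)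
      exact_mod_cast this
    subst hj
    obtain ⟨k, hk⟩ := mod2pi_eq_imp h1
    have hne : (n:ℝ) ≠ 0 := by positivity
    push_cast at hk
    field_simp at hk
    have h5 : 2*Real.pi*(((i:ℕ):ℝ) - ((i':ℕ):ℝ)) = 2*Real.pi*((n:ℝ)*(k:ℝ)) := by
      ring_nf at hk ⊢
      linarith
    have h3 := mul_left_cancel₀ (Real.two_pi_pos.ne') h5
    have h4 : ((i:ℕ):ℤ) - ((i':ℕ):ℤ) = (n:ℤ)*k := by exact_mod_cast h3
    have hi0 : (0:ℤ) ≤ ((i:ℕ):ℤ) := Int.ofNat_nonneg _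
    have hi0' : (0:ℤ) ≤ ((i':ℕ):ℤ) := Int.ofNat_nonneg _
    have hi1 : ((i:ℕ):ℤ) < (n:ℤ) := by exact_mod_cast i.2
    have hi1' : ((i':ℕ):ℤ) < (n:ℤ) := by exact_mod_cast i'.2
    have hn' : (0:ℤ) < (n:ℤ) := by exact_mod_cast Nat.lt_of_lt_of_le Nat.zero_lt_one hn
    have hk0 : k = 0 := by
      rcases lt_trichotomy k 0 with hk0 | hk0 | hk0
      · exfalso
        have h6 : (n:ℤ)*k ≤ -(n:ℤ) := by nlinarith
        linarith
      · exact hk0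
      · exfalso
        have h6 : (n:ℤ) ≤ (n:ℤ)*k := by nlinarith
        linarith
    rw [hk0, mul_zero] at h4
    have hi : ((i:ℕ):ℤ) = ((i':ℕ):ℤ) := by omega
    have : i = i' := by
      apply Fin.ext; exact_mod_cast hi
    simp [this]
  · rintro ⟨p, i, j, h0, hin, rfl⟩
    refine ⟨⟨⟨i.toNat, ?_⟩, j⟩, ?_⟩
    · omega
    · apply Subtype.ext
      simp only [latf]
      congr 2
      simp [Int.toNat_of_nonneg h0]

/-! ### Generic integration lemmas -/

lemma setLIntegral_shift (H : ℝ → ENNReal) (a b t : ℝ) :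
    ∫⁻ x in Set.Ico a b, H (x + t) = ∫⁻ x in Set.Ico (a + t) (b + t), H x := by
  have h := (measurePreserving_add_right volume t).setLIntegral_comp_preimage_emb
    (measurableEmbedding_addRight t) H (Set.Ico (a+t) (b+t))
  rw [Set.preimage_add_const_Ico] at h
  simpa using h

lemma locIntegrable {g : ℝ → ℂ} {T : ℝ} (hT : 0 < T)
    (h : ∀ k : ℤ, IntegrableOn g (Set.Ico (T*k) (T*(k+1)))) (a b : ℝ) :
    IntervalIntegrable g volume a b := by
  have key : ∀ (k : ℤ) (m : ℕ), IntegrableOn g (Set.Ico (T*k) (T*(k+m))) := by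
    intro k m
    induction m with
    | zero => simp
    | succ m ih =>
      have hle1 : T*k ≤ T*(k+m) := by
        have : (k:ℝ) ≤ k+m := by push_cast; linarith [Nat.cast_nonneg (α := ℝ) m]
        nlinarith
      have hle2 : T*(k+m) ≤ T*(k+m+1) := by nlinarith [hT, (by push_cast; linarith : ((k:ℝ)+m) ≤ (k:ℝ)+m+1)]
      have hu : Set.Ico (T*k) (T*(k+m)) ∪ Set.Ico (T*(k+m)) (T*(k+m+1)) = Set.Ico (T*k) (T*(k+m+1)) :=
        Set.Ico_union_Ico_eq_Ico hle1 hle2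
      have h2 := h (k+m)
      push_cast at h2 hu ⊢
      have hc : ((k:ℝ) + (↑m + 1)) = ((k:ℝ) + ↑m + 1) := by ring
      rw [hc, ← hu]
      exact ih.union h2
  rw [intervalIntegrable_iff]
  set lo := min a b with hlo
  set hi := max a b with hhi
  obtain ⟨k, hk⟩ : ∃ k : ℤ, T*k ≤ lo := ⟨⌊lo/T⌋, by
    have := Int.floor_le (lo/T)
    calc T*⌊lo/T⌋ ≤ T*(lo/T) := by nlinarith
    _ = lo := by field_simp⟩
  obtain ⟨m, hm⟩ : ∃ m : ℕ, hi < T*(k+m) := by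
    obtain ⟨m, hm⟩ := exists_nat_gt ((hi - T*k)/T)
    refine ⟨m, ?_⟩
    have : hi - T*k < T*m := by
      have := (div_lt_iff₀ hT).mp hm
      linarith
    push_cast
    nlinarith
  apply (key k m).mono_set
  intro x hx
  rw [Set.uIoc_eq_union] at hx
  have hx1 : lo < x := by
    rcases hx with h' | h'
    · exact lt_of_le_of_lt (min_le_left a b) h'.1
    · exact lt_of_le_of_lt (min_le_right a b) h'.1
  have hx2 : x ≤ hi := by
    rcases hx with h' | h'
    · exact le_trans h'.2 (le_max_right a b)
    · exact le_trans h'.2 (le_max_left a b)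
  exact ⟨le_trans hk hx1.le, lt_of_le_of_lt hx2 hm⟩

lemma iUnion_Ioc_mul {T : ℝ} (hT : 0 < T) :
    ⋃ j : ℤ, Set.Ioc ((j:ℝ)*T) (((j:ℝ)+1)*T) = Set.univ := by
  have h := iUnion_Ioc_zsmul hT
  simp only [zsmul_eq_mul] at h
  convert h using 3 with j
  push_cast
  ring_nf

lemma disj_Ioc {T : ℝ} (hT : 0 < T) :
    Pairwise (Function.onFun Disjoint fun j : ℤ => Set.Ioc ((j:ℝ)*T) (((j:ℝ)+1)*T)) := by
  intro i j hij
  simp only [Function.onFun]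
  rw [Set.Ioc_disjoint_Ioc]
  rcases lt_or_gt_of_ne hij with h | h
  · have : ((i:ℝ)+1) ≤ j := by exact_mod_cast h
    calc min (((i:ℝ)+1)*T) (((j:ℝ)+1)*T) ≤ ((i:ℝ)+1)*T := min_le_left _ _
    _ ≤ (j:ℝ)*T := by nlinarith
    _ ≤ max ((i:ℝ)*T) ((j:ℝ)*T) := le_max_right _ _
  · have : ((j:ℝ)+1) ≤ i := by exact_mod_cast h
    calc min (((i:ℝ)+1)*T) (((j:ℝ)+1)*T) ≤ ((j:ℝ)+1)*T := min_le_right _ _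
    _ ≤ (i:ℝ)*T := by nlinarith
    _ ≤ max ((i:ℝ)*T) ((j:ℝ)*T) := le_max_left _ _

lemma strip_lint (g : ℝ × ℝ → ENNReal) (hg : Measurable g) (s : Set ℝ) :
    ∫⁻ x in s ×ˢ (Set.univ : Set ℝ), g x = ∫⁻ φ in s, ∫⁻ z, g (φ, z) := by
  rw [Measure.volume_eq_prod, ← Measure.prod_restrict, Measure.restrict_univ]
  exact MeasureTheory.lintegral_prod g hg.aemeasurable

lemma strip_int (f : ℝ × ℝ → ℂ) (s : Set ℝ) (hf : IntegrableOn f (s ×ˢ (Set.univ : Set ℝ))) :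
    ∫ x in s ×ˢ (Set.univ : Set ℝ), f x = ∫ φ in s, ∫ z, f (φ, z) := by
  rw [Measure.volume_eq_prod, ← Measure.prod_restrict, Measure.restrict_univ]
  apply MeasureTheory.integral_prod
  rwa [IntegrableOn, Measure.volume_eq_prod, ← Measure.prod_restrict, Measure.restrict_univ] at hf

lemma strip_int_symm (f : ℝ × ℝ → ℂ) (s : Set ℝ) (hf : IntegrableOn f (s ×ˢ (Set.univ : Set ℝ))) :
    ∫ x in s ×ˢ (Set.univ : Set ℝ), f x = ∫ z : ℝ, ∫ φ in s, f (φ, z) := by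
  rw [Measure.volume_eq_prod, ← Measure.prod_restrict, Measure.restrict_univ]
  apply MeasureTheory.integral_prod_symm
  rwa [IntegrableOn, Measure.volume_eq_prod, ← Measure.prod_restrict, Measure.restrict_univ] at hf

lemma strip_marginal (f : ℝ × ℝ → ℂ) (s : Set ℝ) (hf : IntegrableOn f (s ×ˢ (Set.univ : Set ℝ))) :
    Integrable (fun z : ℝ => ∫ φ in s, f (φ, z)) := by
  rw [IntegrableOn, Measure.volume_eq_prod, ← Measure.prod_restrict, Measure.restrict_univ] at hf
  exact hf.integral_prod_right

lemma strip_ae_slice (f : ℝ × ℝ → ℂ) (s : Set ℝ) (hf : IntegrableOn f (s ×ˢ (Set.univ : Set ℝ))) :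
    ∀ᵐ z : ℝ, IntegrableOn (fun φ => f (φ, z)) s := by
  rw [IntegrableOn, Measure.volume_eq_prod, ← Measure.prod_restrict, Measure.restrict_univ] at hf
  exact hf.swap.prod_right_ae

lemma strip_shift (g : ℝ × ℝ → ENNReal) (hg : Measurable g) (t : ℝ)
    (hper : ∀ x : ℝ × ℝ, g (x.1 + t, x.2) = g x) (a b : ℝ) :
    ∫⁻ x in Set.Ico (a+t) (b+t) ×ˢ (Set.univ : Set ℝ), g x
      = ∫⁻ x in Set.Ico a b ×ˢ (Set.univ : Set ℝ), g x := by
  rw [strip_lint g hg, strip_lint g hg, ← setLIntegral_shift (fun φ => ∫⁻ z, g (φ, z)) a b t]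
  apply MeasureTheory.setLIntegral_congr_fun measurableSet_Ico
  intro φ _
  exact lintegral_congr fun z => hper (φ, z)

/-! ### Slicing of skewed cells -/

def sliceSet (B : Set ℝ) (l r : ℝ → ℝ) : Set (ℝ × ℝ) :=
  {x : ℝ × ℝ | x.2 ∈ B ∧ x.1 ∈ Set.Ico (l x.2) (r x.2)}

lemma sliceSet_meas (B : Set ℝ) (l r : ℝ → ℝ) (hB : MeasurableSet B)
    (hl : Measurable l) (hr : Measurable r) :
    MeasurableSet (sliceSet B l r) := by
  have h1 : MeasurableSet {x : ℝ × ℝ | x.2 ∈ B} := measurable_snd hB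
  have h2 : MeasurableSet {x : ℝ × ℝ | l x.2 ≤ x.1} :=
    measurableSet_le (hl.comp measurable_snd) measurable_fst
  have h3 : MeasurableSet {x : ℝ × ℝ | x.1 < r x.2} :=
    measurableSet_lt measurable_fst (hr.comp measurable_snd)
  have : sliceSet B l r = ({x : ℝ × ℝ | x.2 ∈ B} ∩ {x : ℝ × ℝ | l x.2 ≤ x.1}) ∩ {x : ℝ × ℝ | x.1 < r x.2} := by
    ext x; simp [sliceSet, Set.mem_Ico, and_assoc]
  rw [this]
  exact (h1.inter h2).inter h3

lemma sliceSet_key (B : Set ℝ) (l r : ℝ → ℝ) (f : ℝ × ℝ → ℂ) :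
    (fun z => ∫ φ : ℝ, (sliceSet B l r).indicator f (φ, z)) =
      B.indicator (fun z => ∫ φ in Set.Ico (l z) (r z), f (φ, z)) := by
  funext z
  by_cases hz : z ∈ B
  · have h1 : (fun φ => (sliceSet B l r).indicator f (φ, z)) =
        (Set.Ico (l z) (r z)).indicator (fun φ => f (φ, z)) := by
      funext φ
      by_cases hφ : φ ∈ Set.Ico (l z) (r z)
      · have hmem : (φ, z) ∈ sliceSet B l r := ⟨hz, hφ⟩
        rw [Set.indicator_of_mem hmem f, Set.indicator_of_mem hφ]
      · have hmem : (φ, z) ∉ sliceSet B l r := fun h => hφ h.2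
        rw [Set.indicator_of_notMem hmem f, Set.indicator_of_notMem hφ]
    rw [h1, MeasureTheory.integral_indicator measurableSet_Ico,
      Set.indicator_of_mem hz]
  · have h1 : (fun φ => (sliceSet B l r).indicator f (φ, z)) = fun _ => (0:ℂ) := by
      funext φ
      have hmem : (φ, z) ∉ sliceSet B l r := fun h => hz h.1
      exact Set.indicator_of_notMem hmem f
    rw [h1, Set.indicator_of_notMem hz]
    simp

lemma slice_int (B : Set ℝ) (l r : ℝ → ℝ) (f : ℝ × ℝ → ℂ) (hB : MeasurableSet B)
    (hl : Measurable l) (hr : Measurable r)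
    (hf : IntegrableOn f (sliceSet B l r)) :
    ∫ x in sliceSet B l r, f x = ∫ z in B, ∫ φ in Set.Ico (l z) (r z), f (φ, z) := by
  have hU := sliceSet_meas B l r hB hl hr
  have hind : Integrable ((sliceSet B l r).indicator f) volume :=
    (integrable_indicator_iff hU).2 hf
  rw [← MeasureTheory.integral_indicator hU]
  have hind' : Integrable ((sliceSet B l r).indicator f) ((volume : Measure ℝ).prod volume) := by
    rwa [← Measure.volume_eq_prod]
  rw [Measure.volume_eq_prod, MeasureTheory.integral_prod_symm _ hind']
  rw [show (fun z => ∫ φ : ℝ, (sliceSet B l r).indicator f (φ, z)) =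
      B.indicator (fun z => ∫ φ in Set.Ico (l z) (r z), f (φ, z)) from
    sliceSet_key B l r f]
  exact MeasureTheory.integral_indicator hB

lemma slice_marg (B : Set ℝ) (l r : ℝ → ℝ) (f : ℝ × ℝ → ℂ) (hB : MeasurableSet B)
    (hl : Measurable l) (hr : Measurable r)
    (hf : IntegrableOn f (sliceSet B l r)) :
    IntegrableOn (fun z => ∫ φ in Set.Ico (l z) (r z), f (φ, z)) B := by
  have hU := sliceSet_meas B l r hB hl hr
  have hind : Integrable ((sliceSet B l r).indicator f) ((volume : Measure ℝ).prod volume) := by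
    rw [← Measure.volume_eq_prod]
    exact (integrable_indicator_iff hU).2 hf
  have h2 : Integrable (fun z => ∫ φ : ℝ, (sliceSet B l r).indicator f (φ, z)) volume := by
    have := hind.swap.integral_prod_left
    exact this
  rw [sliceSet_key B l r f] at h2
  exact (integrable_indicator_iff hB).1 h2

/-! ### The integrand -/

def ecf (q : ℤ × ℝ) : ℝ × ℝ → ℂ :=
  fun x => Complex.exp (-Complex.I * (((q.1 : ℝ) * x.1 + q.2 * x.2 : ℝ) : ℂ))

def Gf (ψ : ℝ → ℝ → ℂ) (q : ℤ × ℝ) : ℝ × ℝ → ℂ :=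
  fun x => ψ (mod2pi x.1) x.2 * ecf q x

lemma ecf_cont (q : ℤ × ℝ) : Continuous (ecf q) := by
  apply Complex.continuous_exp.comp
  apply Continuous.mul continuous_const
  apply Complex.continuous_ofReal.comp
  exact ((continuous_const.mul continuous_fst).add (continuous_const.mul continuous_snd))

lemma ecf_norm (q : ℤ × ℝ) (x : ℝ × ℝ) : ‖ecf q x‖ = 1 := by
  unfold ecf
  rw [show (-Complex.I * (((q.1 : ℝ) * x.1 + q.2 * x.2 : ℝ) : ℂ))
      = ((-((q.1 : ℝ) * x.1 + q.2 * x.2) : ℝ) : ℂ) * Complex.I by push_cast; ring]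
  exact Complex.norm_exp_ofReal_mul_I _

lemma mod2pi_meas : Measurable mod2pi := by
  unfold mod2pi
  apply Measurable.sub measurable_id
  apply Measurable.mul measurable_const
  exact (measurable_from_top (f := fun k : ℤ => (k:ℝ))).comp
    (Int.measurable_floor.comp (measurable_id.div_const _))

lemma psi_mod_meas {ψ : ℝ → ℝ → ℂ}
    (hcont : ContinuousOn (fun p : ℝ × ℝ => ψ p.1 p.2)
      (Set.Ico (0:ℝ) (2*Real.pi) ×ˢ (Set.univ : Set ℝ))) :
    Measurable (fun x : ℝ × ℝ => ψ (mod2pi x.1) x.2) := by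
  have hmap : Measurable (fun x : ℝ × ℝ =>
      (⟨(mod2pi x.1, x.2), ⟨mod2pi_mem x.1, Set.mem_univ _⟩⟩ :
        (Set.Ico (0:ℝ) (2*Real.pi) ×ˢ (Set.univ : Set ℝ)))) :=
    Measurable.subtype_mk ((mod2pi_meas.comp measurable_fst).prodMk measurable_snd)
  have hres : Continuous ((Set.Ico (0:ℝ) (2*Real.pi) ×ˢ (Set.univ : Set ℝ)).restrict
      (fun p : ℝ × ℝ => ψ p.1 p.2)) := hcont.restrict
  exact hres.measurable.comp hmap

lemma Gf_meas {ψ : ℝ → ℝ → ℂ} (q : ℤ × ℝ)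
    (hcont : ContinuousOn (fun p : ℝ × ℝ => ψ p.1 p.2)
      (Set.Ico (0:ℝ) (2*Real.pi) ×ˢ (Set.univ : Set ℝ))) :
    Measurable (Gf ψ q) :=
  (psi_mod_meas hcont).mul (ecf_cont q).measurable

lemma Gf_nnnorm (ψ : ℝ → ℝ → ℂ) (q : ℤ × ℝ) (x : ℝ × ℝ) :
    (‖Gf ψ q x‖₊ : ENNReal) = (‖ψ (mod2pi x.1) x.2‖₊ : ENNReal) := by
  have : ‖Gf ψ q x‖ = ‖ψ (mod2pi x.1) x.2‖ := by
    unfold Gf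
    rw [norm_mul, ecf_norm, mul_one]
  rw [ENNReal.coe_inj]
  ext
  simpa using this

def vf (θ₀ τ₀ c : ℝ) (n : ℕ) (p : Fin n × ℤ) : ℝ × ℝ :=
  (((p.1 : ℕ) : ℝ) * c + θ₀ * (p.2 : ℝ), τ₀ * (p.2 : ℝ))

def Kf (θ₀ τ₀ c : ℝ) (G : ℝ × ℝ → ℂ) (i : ℕ) (u : ℝ) : ℂ :=
  ∫ φ in (u/τ₀*θ₀ - (i:ℝ)*c)..(u/τ₀*θ₀ - (i:ℝ)*c + c), G (φ, u)

def Wf (G : ℝ × ℝ → ℂ) (u : ℝ) : ℂ := ∫ φ in Set.Ioc (0:ℝ) (2*Real.pi), G (φ, u)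

set_option maxHeartbeats 1000000 in
/-- On reciprocal lattice points, the Fourier coefficients of a helically
periodized function `ρ = Σ_{(θ,τ)∈H₀} ψ(·−θ mod 2π, ·−τ)` computed from any
representative `ψ` agree with the Fourier integral of `ρ` over the unit cell. -/
theorem fourier_coefficient_unit_cell
    (θ₀ τ₀ : ℝ) (hθ₀ : θ₀ ∈ Set.Ico 0 (2*Real.pi)) (hτ₀ : 0 < τ₀)
    (n : ℕ) (hn : 1 ≤ n)
    (ψ : ℝ → ℝ → ℂ)
    (hcont : ContinuousOn (fun p : ℝ × ℝ => ψ p.1 p.2)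
      (Set.Ico (0:ℝ) (2*Real.pi) ×ˢ (Set.univ : Set ℝ)))
    (hsum : (∑' p : helLat θ₀ τ₀ n,
        ∫⁻ φ in Set.Ico (0:ℝ) (2*Real.pi), ∫⁻ z : ℝ,
          (‖ψ (mod2pi (φ - (p : ℝ × ℝ).1)) (z - (p : ℝ × ℝ).2)‖₊ : ENNReal)) < ⊤)
    (ρ : ℝ → ℝ → ℂ)
    (hρ : ∀ φ z : ℝ, ρ φ z =
      ∑' p : helLat θ₀ τ₀ n, ψ (mod2pi (φ - (p : ℝ × ℝ).1)) (z - (p : ℝ × ℝ).2)) :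
    ∀ q ∈ helRec θ₀ τ₀ n,
      (∫ φ in (0:ℝ)..(2*Real.pi), ∫ z : ℝ,
          ψ φ z * Complex.exp (-Complex.I * (((q.1 : ℝ) * φ + q.2 * z : ℝ) : ℂ))) =
      ∫ p in Ucell θ₀ τ₀ n,
          ρ p.1 p.2 * Complex.exp (-Complex.I * (((q.1 : ℝ) * p.1 + q.2 * p.2 : ℝ) : ℂ)) := by
  intro q hq
  obtain ⟨hθ0, hθ2⟩ := hθ₀
  have h2π : (0:ℝ) < 2*Real.pi := Real.two_pi_pos
  have hn0 : 0 < n := Nat.lt_of_lt_of_le Nat.zero_lt_one hn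
  have hnR : (0:ℝ) < (n:ℝ) := by exact_mod_cast hn0
  set c : ℝ := 2*Real.pi/n with hc
  have hcpos : 0 < c := by positivity
  have hnc : (n:ℝ) * c = 2*Real.pi := by rw [hc]; field_simp
  have hcle : c ≤ 2*Real.pi := by
    rw [hc]
    apply div_le_self h2π.le
    exact_mod_cast hn
  set G : ℝ × ℝ → ℂ := Gf ψ q with hG
  have hGm : Measurable G := Gf_meas q hcont
  set v : Fin n × ℤ → ℝ × ℝ := vf θ₀ τ₀ c n with hv
  set e : Fin n × ℤ ≃ helLat θ₀ τ₀ n := Equiv.ofBijective _ (latf_bij θ₀ τ₀ n hτ₀ hn) with he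
  have hv1 : ∀ p : Fin n × ℤ, (e p : ℝ × ℝ).1 = mod2pi ((v p).1) := by
    intro p
    show (latf θ₀ τ₀ n hτ₀ hn p : ℝ × ℝ).1 = mod2pi ((vf θ₀ τ₀ c n p).1)
    simp only [latf, vf]
    congr 1
    rw [hc]
    push_cast
    ring
  have hv2 : ∀ p : Fin n × ℤ, (e p : ℝ × ℝ).2 = (v p).2 := fun p => rfl
  -- character identity
  have hvchar : ∀ p : Fin n × ℤ, ∃ M : ℤ,
      (q.1 : ℝ) * (v p).1 + q.2 * (v p).2 = 2*Real.pi*(M:ℝ) := by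
    intro p
    obtain ⟨m, hm⟩ := hq (e p) (e p).2
    rw [hv1 p, hv2 p] at hm
    obtain ⟨k, hk⟩ := mod2pi_sub_exists ((v p).1)
    refine ⟨m - q.1 * k, ?_⟩
    rw [hk] at hm
    push_cast at hm ⊢
    ring_nf at hm ⊢
    linarith
  have hecper : ∀ (p : Fin n × ℤ) (x : ℝ × ℝ), ecf q (x - v p) = ecf q x := by
    intro p x
    obtain ⟨M, hM⟩ := hvchar p
    unfold ecf
    rw [show (x - v p).1 = x.1 - (v p).1 from rfl, show (x - v p).2 = x.2 - (v p).2 from rfl]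
    rw [show (q.1 : ℝ)*(x.1 - (v p).1) + q.2*(x.2 - (v p).2)
        = ((q.1:ℝ)*x.1 + q.2*x.2) - 2*Real.pi*(M:ℝ) from by linarith]
    rw [show (-Complex.I * ((((q.1:ℝ)*x.1 + q.2*x.2) - 2*Real.pi*(M:ℝ) : ℝ):ℂ))
        = (-Complex.I * ((((q.1:ℝ)*x.1 + q.2*x.2) : ℝ):ℂ)) + (M:ℂ)*(2*(Real.pi:ℂ)*Complex.I)
      from by push_cast; ring]
    rw [Complex.exp_add, Complex.exp_int_mul_two_pi_mul_I, mul_one]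
  have hcharlem : ∀ (p : Fin n × ℤ) (x : ℝ × ℝ),
      ψ (mod2pi (x.1 - (e p : ℝ × ℝ).1)) (x.2 - (e p : ℝ × ℝ).2) * ecf q x = G (x - v p) := by
    intro p x
    rw [hv1 p, hv2 p, hG]
    show _ = ψ (mod2pi ((x - v p).1)) ((x - v p).2) * ecf q (x - v p)
    rw [hecper p x, show (x - v p).1 = x.1 - (v p).1 from rfl,
      show (x - v p).2 = x.2 - (v p).2 from rfl, mod2pi_sub_congr]
  -- measurability of translates
  have hNm : ∀ w : ℝ × ℝ, Measurable (fun x : ℝ × ℝ => (‖G (x - w)‖₊ : ENNReal)) := by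
    intro w
    exact (hGm.comp (measurable_id.sub measurable_const)).nnnorm.coe_nnreal_ennreal
  -- the basic strip integrals
  set J : Fin n × ℤ → ENNReal := fun p =>
    ∫⁻ x in Set.Ico (0:ℝ) (2*Real.pi) ×ˢ (Set.univ : Set ℝ), (‖G (x - v p)‖₊ : ENNReal) with hJ
  set Tfun : helLat θ₀ τ₀ n → ENNReal := fun P =>
    ∫⁻ φ in Set.Ico (0:ℝ) (2*Real.pi), ∫⁻ z : ℝ,
      (‖ψ (mod2pi (φ - (P : ℝ × ℝ).1)) (z - (P : ℝ × ℝ).2)‖₊ : ENNReal) with hT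
  have hJeq : ∀ p : Fin n × ℤ, J p = Tfun (e p) := by
    intro p
    simp only [hJ, hT]
    rw [strip_lint _ (hNm (v p))]
    refine MeasureTheory.lintegral_congr fun φ => MeasureTheory.lintegral_congr fun z => ?_
    rw [hG, Gf_nnnorm, hv1 p, hv2 p]
    rw [show ((φ, z) - v p).1 = φ - (v p).1 from rfl, show ((φ, z) - v p).2 = z - (v p).2 from rfl]
    rw [mod2pi_sub_congr]
  have hJsum : ∑' p : Fin n × ℤ, J p < ⊤ := by
    calc ∑' p : Fin n × ℤ, J p = ∑' p : Fin n × ℤ, Tfun (e p) := tsum_congr hJeq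
    _ = ∑' P : helLat θ₀ τ₀ n, Tfun P := e.tsum_eq Tfun
    _ < ⊤ := hsum
  have hJfin : ∀ p, J p < ⊤ := fun p => lt_of_le_of_lt (ENNReal.le_tsum p) hJsum
  -- periodicity of the norm integrand
  have hNper : ∀ (x : ℝ × ℝ) (k : ℤ), (‖G (x.1 + 2*Real.pi*(k:ℝ), x.2)‖₊ : ENNReal) = (‖G x‖₊ : ENNReal) := by
    intro x k
    rw [hG, Gf_nnnorm, Gf_nnnorm]
    show (‖ψ (mod2pi (x.1 + 2*Real.pi*(k:ℝ))) x.2‖₊ : ENNReal) = _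
    rw [mod2pi_add_int_mul]
  have hGsub_per : ∀ (p : Fin n × ℤ) (k : ℤ) (x : ℝ × ℝ),
      (‖G ((x.1 + 2*Real.pi*(k:ℝ), x.2) - v p)‖₊ : ENNReal) = (‖G (x - v p)‖₊ : ENNReal) := by
    intro p k x
    have h1 : ((x.1 + 2*Real.pi*(k:ℝ), x.2) - v p) = ((x - v p).1 + 2*Real.pi*(k:ℝ), (x - v p).2) := by
      rw [Prod.ext_iff]
      constructor
      · show x.1 + 2*Real.pi*(k:ℝ) - (v p).1 = x.1 - (v p).1 + 2*Real.pi*(k:ℝ)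
        ring
      · rfl
    rw [h1, hNper]
  have hstrip_k : ∀ (p : Fin n × ℤ) (k : ℤ),
      (∫⁻ x in Set.Ico (2*Real.pi*(k:ℝ)) (2*Real.pi*(k:ℝ) + 2*Real.pi) ×ˢ (Set.univ : Set ℝ),
        (‖G (x - v p)‖₊ : ENNReal)) = J p := by
    intro p k
    have h := strip_shift (fun x => (‖G (x - v p)‖₊ : ENNReal)) (hNm (v p)) (2*Real.pi*(k:ℝ))
      (fun x => hGsub_per p k x) 0 (2*Real.pi)
    rw [zero_add, add_comm (2*Real.pi) (2*Real.pi*(k:ℝ))] at h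
    rw [h, hJ]
  -- unit cell description
  have hUrep : Ucell θ₀ τ₀ n = sliceSet (Set.Ico 0 τ₀) (fun z => z/τ₀*θ₀) (fun z => z/τ₀*θ₀ + c) := by
    ext x
    constructor
    · rintro ⟨s, t, hs, ht, hx⟩
      have hx1 : x.1 = s * (2*Real.pi/n) + t * θ₀ := by rw [hx]
      have hx2 : x.2 = t * τ₀ := by rw [hx]
      have htz : x.2/τ₀ = t := by rw [hx2]; field_simp
      refine ⟨⟨?_, ?_⟩, ?_, ?_⟩
      · rw [hx2]; exact mul_nonneg ht.1 hτ₀.le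
      · rw [hx2]; nlinarith [ht.2, hτ₀]
      · show x.2/τ₀*θ₀ ≤ x.1
        rw [htz, hx1, ← hc]; nlinarith [hs.1, hcpos]
      · show x.1 < x.2/τ₀*θ₀ + c
        rw [htz, hx1, ← hc]; nlinarith [hs.2, hcpos]
    · rintro ⟨hz, hφ⟩
      refine ⟨(x.1 - x.2/τ₀*θ₀)/c, x.2/τ₀, ⟨?_, ?_⟩, ⟨?_, ?_⟩, ?_⟩
      · exact div_nonneg (by linarith [hφ.1]) hcpos.le
      · rw [div_lt_one hcpos]; linarith [hφ.2]
      · exact div_nonneg hz.1 hτ₀.le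
      · rw [div_lt_one hτ₀]; exact hz.2
      · have h1 : (x.1 - x.2/τ₀*θ₀)/c * (2*Real.pi/n) = x.1 - x.2/τ₀*θ₀ := by
          rw [← hc]; field_simp
        have h2 : x.2/τ₀*τ₀ = x.2 := by field_simp
        rw [Prod.ext_iff]
        constructor
        · show x.1 = (x.1 - x.2/τ₀*θ₀)/c * (2*Real.pi/n) + x.2/τ₀ * θ₀
          rw [h1]; ring
        · show x.2 = x.2/τ₀ * τ₀
          rw [h2]
  have hlmeas : Measurable (fun z : ℝ => z/τ₀*θ₀) := (measurable_id.div_const τ₀).mul_const θ₀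
  have hrmeas : Measurable (fun z : ℝ => z/τ₀*θ₀ + c) := hlmeas.add_const c
  have hUmeas : MeasurableSet (Ucell θ₀ τ₀ n) := by
    rw [hUrep]
    exact sliceSet_meas _ _ _ measurableSet_Ico hlmeas hrmeas
  have hUsub : Ucell θ₀ τ₀ n ⊆ Set.Ico (0:ℝ) (2*Real.pi + 2*Real.pi) ×ˢ (Set.univ : Set ℝ) := by
    rintro x ⟨s, t, hs, ht, hx⟩
    have hx1 : x.1 = s * (2*Real.pi/n) + t * θ₀ := by rw [hx]
    refine ⟨?_, trivial⟩
    constructor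
    · rw [hx1, ← hc]; nlinarith [hs.1, ht.1, hθ0, hcpos]
    · rw [hx1, ← hc]; nlinarith [hs.1, hs.2, ht.1, ht.2, hθ2, hθ0, hcle, hcpos]
  -- bound over the unit cell
  have hUbound : ∀ p : Fin n × ℤ,
      (∫⁻ x in Ucell θ₀ τ₀ n, (‖G (x - v p)‖₊ : ENNReal)) ≤ 2 * J p := by
    intro p
    have h1 : (∫⁻ x in Ucell θ₀ τ₀ n, (‖G (x - v p)‖₊ : ENNReal))
        ≤ ∫⁻ x in Set.Ico (0:ℝ) (2*Real.pi + 2*Real.pi) ×ˢ (Set.univ : Set ℝ),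
            (‖G (x - v p)‖₊ : ENNReal) :=
      lintegral_mono' (Measure.restrict_mono hUsub le_rfl) le_rfl
    have hsplit : Set.Ico (0:ℝ) (2*Real.pi + 2*Real.pi) ×ˢ (Set.univ : Set ℝ)
        = (Set.Ico (0:ℝ) (2*Real.pi) ×ˢ (Set.univ : Set ℝ))
          ∪ (Set.Ico (2*Real.pi) (2*Real.pi + 2*Real.pi) ×ˢ (Set.univ : Set ℝ)) := by
      rw [← Set.union_prod, Set.Ico_union_Ico_eq_Ico (by linarith) (by linarith)]
    have hdisj : Disjoint (Set.Ico (0:ℝ) (2*Real.pi) ×ˢ (Set.univ : Set ℝ))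
        (Set.Ico (2*Real.pi) (2*Real.pi+2*Real.pi) ×ˢ (Set.univ : Set ℝ)) := by
      apply Set.disjoint_left.mpr
      rintro x ⟨hx1, -⟩ ⟨hx2, -⟩
      exact absurd hx2.1 (not_le.mpr hx1.2)
    have hmeas2 : MeasurableSet (Set.Ico (2*Real.pi) (2*Real.pi+2*Real.pi) ×ˢ (Set.univ : Set ℝ)) :=
      measurableSet_Ico.prod MeasurableSet.univ
    have h3 : (∫⁻ x in Set.Ico (2*Real.pi) (2*Real.pi+2*Real.pi) ×ˢ (Set.univ : Set ℝ),
        (‖G (x - v p)‖₊ : ENNReal)) = J p := by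
      have h := hstrip_k p 1
      rw [show 2*Real.pi*((1:ℤ):ℝ) = 2*Real.pi by push_cast; ring] at h
      exact h
    calc (∫⁻ x in Ucell θ₀ τ₀ n, (‖G (x - v p)‖₊ : ENNReal))
        ≤ ∫⁻ x in Set.Ico (0:ℝ) (2*Real.pi + 2*Real.pi) ×ˢ (Set.univ : Set ℝ),
            (‖G (x - v p)‖₊ : ENNReal) := h1
    _ = J p + J p := by rw [hsplit, lintegral_union hmeas2 hdisj, hJ, h3]
    _ = 2 * J p := (two_mul _).symm
  have hUsum : (∑' p : Fin n × ℤ, ∫⁻ x in Ucell θ₀ τ₀ n, (‖G (x - v p)‖₊ : ENNReal)) ≠ ⊤ := by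
    have h1 : (∑' p : Fin n × ℤ, ∫⁻ x in Ucell θ₀ τ₀ n, (‖G (x - v p)‖₊ : ENNReal))
        ≤ ∑' p : Fin n × ℤ, 2 * J p := ENNReal.tsum_le_tsum hUbound
    rw [ENNReal.tsum_mul_left] at h1
    exact ne_top_of_le_ne_top (ENNReal.mul_ne_top (by simp) hJsum.ne) h1
  have hUIntOn : ∀ p : Fin n × ℤ, IntegrableOn (fun x => G (x - v p)) (Ucell θ₀ τ₀ n) := by
    intro p
    refine ⟨(hGm.comp (measurable_id.sub measurable_const)).aestronglyMeasurable, ?_⟩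
    have hb := lt_of_le_of_lt (hUbound p) (ENNReal.mul_lt_top (by simp) (hJfin p))
    exact hb
    -- strip integrability of G itself
  have hvp0 : v (⟨0, hn0⟩, (0:ℤ)) = (0 : ℝ × ℝ) := by
    rw [hv]
    unfold vf
    rw [Prod.ext_iff]
    constructor
    · show ((0:ℕ):ℝ) * c + θ₀ * ((0:ℤ):ℝ) = 0
      push_cast; ring
    · show τ₀ * ((0:ℤ):ℝ) = 0
      push_cast; ring
  have hstripInt : ∀ k : ℤ, IntegrableOn G
      (Set.Ico (2*Real.pi*(k:ℝ)) (2*Real.pi*(k:ℝ) + 2*Real.pi) ×ˢ (Set.univ : Set ℝ)) := by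
    intro k
    refine ⟨hGm.aestronglyMeasurable, ?_⟩
    have h1 : (∫⁻ x in Set.Ico (2*Real.pi*(k:ℝ)) (2*Real.pi*(k:ℝ) + 2*Real.pi) ×ˢ (Set.univ : Set ℝ),
        (‖G x‖₊ : ENNReal))
        = ∫⁻ x in Set.Ico (2*Real.pi*(k:ℝ)) (2*Real.pi*(k:ℝ) + 2*Real.pi) ×ˢ (Set.univ : Set ℝ),
        (‖G (x - v (⟨0, hn0⟩, (0:ℤ)))‖₊ : ENNReal) := by
      refine MeasureTheory.lintegral_congr fun x => ?_
      rw [hvp0, sub_zero]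
    have h2 : (∫⁻ x in Set.Ico (2*Real.pi*(k:ℝ)) (2*Real.pi*(k:ℝ) + 2*Real.pi) ×ˢ (Set.univ : Set ℝ),
        (‖G x‖₊ : ENNReal)) < ⊤ := by
      rw [h1, hstrip_k]
      exact hJfin _
    exact h2
  -- almost-everywhere local integrability of slices
  have hloc : ∀ᵐ u : ℝ, ∀ k : ℤ,
      IntegrableOn (fun φ => G (φ, u)) (Set.Ico (2*Real.pi*(k:ℝ)) (2*Real.pi*((k:ℝ)+1))) := by
    rw [MeasureTheory.ae_all_iff]
    intro k
    have h := strip_ae_slice G _ (hstripInt k)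
    filter_upwards [h] with u hu
    rw [show 2*Real.pi*((k:ℝ)+1) = 2*Real.pi*(k:ℝ) + 2*Real.pi by ring]
    exact hu
  -- the periodic function of φ
  have hperG : ∀ u : ℝ, Function.Periodic (fun φ => G (φ, u)) (2*Real.pi) := by
    intro u φ
    show G (φ + 2*Real.pi, u) = G (φ, u)
    rw [hG]
    unfold Gf
    congr 1
    · show ψ (mod2pi (φ + 2*Real.pi)) u = ψ (mod2pi φ) u
      rw [show φ + 2*Real.pi = φ + 2*Real.pi*((1:ℤ):ℝ) by push_cast; ring, mod2pi_add_int_mul]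
    · show ecf q (φ + 2*Real.pi, u) = ecf q (φ, u)
      unfold ecf
      rw [show (-Complex.I * (((q.1 : ℝ) * (φ + 2*Real.pi, u).1 + q.2 * (φ + 2*Real.pi, u).2 : ℝ) : ℂ))
          = (-Complex.I * (((q.1 : ℝ) * (φ, u).1 + q.2 * (φ, u).2 : ℝ) : ℂ))
            + ((-q.1 : ℤ) : ℂ) * (2*(Real.pi:ℂ)*Complex.I) from by push_cast; ring]
      rw [Complex.exp_add, Complex.exp_int_mul_two_pi_mul_I, mul_one]
  -- a.e. identity: sum over i of the K-integrals is the full-period integral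
  have hKW : ∀ᵐ u : ℝ, ∑ i : Fin n, Kf θ₀ τ₀ c G (i : ℕ) u = Wf G u := by
    filter_upwards [hloc] with u hu
    have hInt : ∀ a b : ℝ, IntervalIntegrable (fun φ => G (φ, u)) volume a b := by
      apply locIntegrable h2π
      intro k
      have h := hu k
      rwa [show 2*Real.pi*((k:ℝ)+1) = 2*Real.pi*(↑k+1) by norm_num] at h
    set A : ℕ → ℝ := fun k => u/τ₀*θ₀ + (((k:ℝ) + 1 - (n:ℝ)))*c with hA
    have hadj : ∑ k ∈ Finset.range n, ∫ x in (A k)..(A (k+1)), G (x, u)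
        = ∫ x in (A 0)..(A n), G (x, u) :=
      intervalIntegral.sum_integral_adjacent_intervals (fun k _ => hInt _ _)
    have hKA : ∀ k ∈ Finset.range n, Kf θ₀ τ₀ c G k u
        = (fun j => ∫ x in (A j)..(A (j+1)), G (x, u)) (n-1-k) := by
      intro k hk
      rw [Finset.mem_range] at hk
      have e1 : ((n - 1 - k : ℕ) : ℝ) = (n:ℝ) - 1 - (k:ℝ) := by
        have h' : n - 1 - k = n - (1 + k) := by omega
        rw [h', Nat.cast_sub (by omega)]
        push_cast; ring
      have e2 : ((n - 1 - k + 1 : ℕ) : ℝ) = (n:ℝ) - (k:ℝ) := by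
        have h' : n - 1 - k + 1 = n - k := by omega
        rw [h', Nat.cast_sub (by omega)]
      unfold Kf
      simp only [hA]
      rw [e1, e2]
      congr 1 <;> ring
    have hsum1 : ∑ i : Fin n, Kf θ₀ τ₀ c G (i:ℕ) u = ∑ k ∈ Finset.range n, Kf θ₀ τ₀ c G k u :=
      Fin.sum_univ_eq_sum_range (fun k => Kf θ₀ τ₀ c G k u) n
    have href : ∑ k ∈ Finset.range n, (fun j => ∫ x in (A j)..(A (j+1)), G (x, u)) (n-1-k)
        = ∑ k ∈ Finset.range n, (fun j => ∫ x in (A j)..(A (j+1)), G (x, u)) k :=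
      Finset.sum_range_reflect (fun j => ∫ x in (A j)..(A (j+1)), G (x, u)) n
    rw [hsum1, Finset.sum_congr rfl hKA, href]
    simp only []
    rw [hadj]
    have hAn : A n = A 0 + 2*Real.pi := by
      simp only [hA]
      push_cast
      rw [← hnc]
      ring
    rw [hAn, (hperG u).intervalIntegral_add_eq (A 0) 0, zero_add,
      intervalIntegral.integral_of_le h2π.le]
    rfl
  -- computing each unit-cell integral
  have hgz : ∀ (i : Fin n) (j : ℤ) (z : ℝ),
      (∫ φ in Set.Ico (z/τ₀*θ₀) (z/τ₀*θ₀ + c), G ((φ, z) - v (i, j)))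
        = Kf θ₀ τ₀ c G (i : ℕ) (z - τ₀*(j:ℝ)) := by
    intro i j z
    set p : Fin n × ℤ := (i, j) with hp
    have hle : z/τ₀*θ₀ ≤ z/τ₀*θ₀ + c := by linarith
    rw [MeasureTheory.integral_Ico_eq_integral_Ioo, ← MeasureTheory.integral_Ioc_eq_integral_Ioo,
      ← intervalIntegral.integral_of_le hle]
    have h1 : (∫ φ in (z/τ₀*θ₀)..(z/τ₀*θ₀ + c), G ((φ, z) - v p))
        = ∫ φ in (z/τ₀*θ₀)..(z/τ₀*θ₀ + c), (fun y => G (y, z - (v p).2)) (φ - (v p).1) := rfl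
    rw [h1, intervalIntegral.integral_comp_sub_right (fun y => G (y, z - (v p).2)) ((v p).1)]
    have hz2 : z - (v p).2 = z - τ₀*(j:ℝ) := rfl
    unfold Kf
    rw [hz2]
    congr 1
    · show z/τ₀*θ₀ - (v p).1 = (z - τ₀*(j:ℝ))/τ₀*θ₀ - ((i:ℕ):ℝ)*c
      show z/τ₀*θ₀ - (((i:ℕ):ℝ)*c + θ₀*(j:ℝ)) = (z - τ₀*(j:ℝ))/τ₀*θ₀ - ((i:ℕ):ℝ)*c
      field_simp
      ring
    · show z/τ₀*θ₀ + c - (v p).1 = (z - τ₀*(j:ℝ))/τ₀*θ₀ - ((i:ℕ):ℝ)*c + c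
      show z/τ₀*θ₀ + c - (((i:ℕ):ℝ)*c + θ₀*(j:ℝ)) = (z - τ₀*(j:ℝ))/τ₀*θ₀ - ((i:ℕ):ℝ)*c + c
      field_simp
      ring
  have hterm : ∀ (i : Fin n) (j : ℤ), (∫ x in Ucell θ₀ τ₀ n, G (x - v (i, j)))
      = ∫ u in (0 - τ₀*(j:ℝ))..(τ₀ - τ₀*(j:ℝ)), Kf θ₀ τ₀ c G (i:ℕ) u := by
    intro i j
    have hint := hUIntOn (i, j)
    rw [hUrep] at hint ⊢
    rw [slice_int _ _ _ _ measurableSet_Ico hlmeas hrmeas hint]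
    have hcong : ∀ z ∈ Set.Ico (0:ℝ) τ₀,
        (∫ φ in Set.Ico (z/τ₀*θ₀) (z/τ₀*θ₀ + c), G ((φ, z) - v (i, j)))
          = Kf θ₀ τ₀ c G (i:ℕ) (z - τ₀*(j:ℝ)) := fun z _ => hgz i j z
    rw [MeasureTheory.setIntegral_congr_fun measurableSet_Ico hcong,
      MeasureTheory.integral_Ico_eq_integral_Ioo, ← MeasureTheory.integral_Ioc_eq_integral_Ioo,
      ← intervalIntegral.integral_of_le hτ₀.le]
    exact intervalIntegral.integral_comp_sub_right (Kf θ₀ τ₀ c G (i:ℕ)) (τ₀*(j:ℝ))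
  have hKIcompInt : ∀ (i : Fin n) (j : ℤ), IntervalIntegrable (Kf θ₀ τ₀ c G (i:ℕ)) volume
      (0 - τ₀*(j:ℝ)) (τ₀ - τ₀*(j:ℝ)) := by
    intro i j
    have hint := hUIntOn (i, j)
    rw [hUrep] at hint
    have hm := slice_marg _ _ _ _ measurableSet_Ico hlmeas hrmeas hint
    have hm2 : IntegrableOn (fun z => Kf θ₀ τ₀ c G (i:ℕ) (z - τ₀*(j:ℝ))) (Set.Ico 0 τ₀) :=
      hm.congr_fun (fun z _ => hgz i j z) measurableSet_Ico
    have hm3 : IntervalIntegrable (fun z => Kf θ₀ τ₀ c G (i:ℕ) (z - τ₀*(j:ℝ))) volume 0 τ₀ := by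
      rw [intervalIntegrable_iff_integrableOn_Ioc_of_le hτ₀.le,
        integrableOn_Ioc_iff_integrableOn_Ioo]
      exact (integrableOn_Ico_iff_integrableOn_Ioo).mp hm2
    have h4 := hm3.comp_sub_right (-(τ₀*(j:ℝ)))
    simp only [sub_neg_eq_add, add_sub_cancel_right] at h4
    rw [show (0:ℝ) - τ₀*(j:ℝ) = 0 + -(τ₀*(j:ℝ)) by ring,
      show τ₀ - τ₀*(j:ℝ) = τ₀ + -(τ₀*(j:ℝ)) by ring]
    exact h4
  -- summability of the terms
  have hSummable : Summable (fun p : Fin n × ℤ => ∫ x in Ucell θ₀ τ₀ n, G (x - v p)) := by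
    apply Summable.of_norm_bounded (g := fun p => (2 * J p).toReal)
    · apply ENNReal.summable_toReal
      rw [ENNReal.tsum_mul_left]
      exact ENNReal.mul_ne_top (by simp) hJsum.ne
    · intro p
      have h1 : ‖∫ x in Ucell θ₀ τ₀ n, G (x - v p)‖
          ≤ (∫⁻ x in Ucell θ₀ τ₀ n, (‖G (x - v p)‖₊ : ENNReal)).toReal := by
        have h := MeasureTheory.norm_integral_le_lintegral_norm
          (μ := volume.restrict (Ucell θ₀ τ₀ n)) (fun x => G (x - v p))
        simp only [ofReal_norm] at h
        exact h
      exact h1.trans (ENNReal.toReal_mono (ENNReal.mul_ne_top (by simp) (hJfin p).ne) (hUbound p))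
  -- RHS rewriting chain
  have hRHS1 : (∫ x in Ucell θ₀ τ₀ n,
        ρ x.1 x.2 * Complex.exp (-Complex.I * (((q.1 : ℝ) * x.1 + q.2 * x.2 : ℝ) : ℂ)))
      = ∫ x in Ucell θ₀ τ₀ n, ∑' p : Fin n × ℤ, G (x - v p) := by
    apply MeasureTheory.setIntegral_congr_fun hUmeas
    intro x _
    show ρ x.1 x.2 * ecf q x = ∑' p : Fin n × ℤ, G (x - v p)
    rw [hρ x.1 x.2, ← tsum_mul_right,
      ← e.tsum_eq (fun P : helLat θ₀ τ₀ n =>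
        ψ (mod2pi (x.1 - (P : ℝ × ℝ).1)) (x.2 - (P : ℝ × ℝ).2) * ecf q x)]
    exact tsum_congr fun p => hcharlem p x
  have hRHS2 : (∫ x in Ucell θ₀ τ₀ n, ∑' p : Fin n × ℤ, G (x - v p))
      = ∑' p : Fin n × ℤ, ∫ x in Ucell θ₀ τ₀ n, G (x - v p) :=
    MeasureTheory.integral_tsum
      (fun _ => (hGm.comp (measurable_id.sub measurable_const)).aestronglyMeasurable) hUsum
  have hRHS3 : (∑' p : Fin n × ℤ, ∫ x in Ucell θ₀ τ₀ n, G (x - v p))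
      = ∑' j : ℤ, ∑ i : Fin n, ∫ x in Ucell θ₀ τ₀ n, G (x - v (i, j)) := by
    calc (∑' p : Fin n × ℤ, ∫ x in Ucell θ₀ τ₀ n, G (x - v p))
        = ∑' r : ℤ × Fin n, ∫ x in Ucell θ₀ τ₀ n, G (x - v ((Equiv.prodComm ℤ (Fin n)) r)) :=
          ((Equiv.prodComm ℤ (Fin n)).tsum_eq
            (fun p : Fin n × ℤ => ∫ x in Ucell θ₀ τ₀ n, G (x - v p))).symm
      _ = ∑' j : ℤ, ∑' i : Fin n, ∫ x in Ucell θ₀ τ₀ n, G (x - v ((Equiv.prodComm ℤ (Fin n)) (j, i))) :=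
          Summable.tsum_prod' (((Equiv.prodComm ℤ (Fin n)).summable_iff).mpr hSummable)
            (fun _ => Summable.of_finite)
      _ = ∑' j : ℤ, ∑ i : Fin n, ∫ x in Ucell θ₀ τ₀ n, G (x - v (i, j)) :=
          tsum_congr fun j => tsum_fintype _
  have hRHS4 : ∀ j : ℤ, (∑ i : Fin n, ∫ x in Ucell θ₀ τ₀ n, G (x - v (i, j)))
      = ∫ u in (0 - τ₀*(j:ℝ))..(τ₀ - τ₀*(j:ℝ)), Wf G u := by
    intro j
    have h1 : (∑ i : Fin n, ∫ x in Ucell θ₀ τ₀ n, G (x - v (i, j)))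
        = ∑ i : Fin n, ∫ u in (0 - τ₀*(j:ℝ))..(τ₀ - τ₀*(j:ℝ)), Kf θ₀ τ₀ c G ((i:ℕ)) u :=
      Finset.sum_congr rfl (fun i _ => hterm i j)
    rw [h1, ← intervalIntegral.integral_finset_sum (fun i _ => hKIcompInt i j)]
    apply intervalIntegral.integral_congr_ae
    filter_upwards [hKW] with u hu _
    exact hu
  -- integrability over the vertical strip with Ioc base
  have hIocInt : IntegrableOn G (Set.Ioc (0:ℝ) (2*Real.pi) ×ˢ (Set.univ : Set ℝ)) := by
    have hIco : IntegrableOn G (Set.Ico (0:ℝ) (2*Real.pi) ×ˢ (Set.univ : Set ℝ)) := by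
      have h := hstripInt 0
      rw [show 2*Real.pi*((0:ℤ):ℝ) = 0 by push_cast; ring, zero_add] at h
      exact h
    have hnull : volume (({(2*Real.pi)} : Set ℝ) ×ˢ (Set.univ : Set ℝ)) = 0 := by
      rw [Measure.volume_eq_prod, Measure.prod_prod]
      simp
    have hsing : IntegrableOn G (({(2*Real.pi)} : Set ℝ) ×ˢ (Set.univ : Set ℝ)) := by
      rw [IntegrableOn, Measure.restrict_eq_zero.mpr hnull]
      exact MeasureTheory.integrable_zero_measure
    apply (hIco.union hsing).mono_set
    rintro x ⟨hx1, hx2⟩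
    rcases eq_or_lt_of_le hx1.2 with heq | hlt
    · right; exact ⟨by simp [heq], trivial⟩
    · left; exact ⟨⟨hx1.1.le, hlt⟩, trivial⟩
  have hWint : Integrable (Wf G) volume := by
    have h := strip_marginal G (Set.Ioc (0:ℝ) (2*Real.pi)) hIocInt
    exact h
  have hRHS5 : (∑' j : ℤ, ∫ u in (0 - τ₀*(j:ℝ))..(τ₀ - τ₀*(j:ℝ)), Wf G u) = ∫ u : ℝ, Wf G u := by
    rw [← (Equiv.neg ℤ).tsum_eq (fun j : ℤ => ∫ u in (0 - τ₀*(j:ℝ))..(τ₀ - τ₀*(j:ℝ)), Wf G u)]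
    have hconv : ∀ j : ℤ, (∫ u in (0 - τ₀*(((Equiv.neg ℤ) j : ℤ):ℝ))..(τ₀ - τ₀*(((Equiv.neg ℤ) j : ℤ):ℝ)), Wf G u)
        = ∫ u in Set.Ioc ((j:ℝ)*τ₀) (((j:ℝ)+1)*τ₀), Wf G u := by
      intro j
      have hle : (0:ℝ) - τ₀*(((Equiv.neg ℤ) j : ℤ):ℝ) ≤ τ₀ - τ₀*(((Equiv.neg ℤ) j : ℤ):ℝ) := by
        linarith
      rw [intervalIntegral.integral_of_le hle]
      have hs : Set.Ioc ((0:ℝ) - τ₀*(((Equiv.neg ℤ) j : ℤ):ℝ)) (τ₀ - τ₀*(((Equiv.neg ℤ) j : ℤ):ℝ))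
          = Set.Ioc ((j:ℝ)*τ₀) (((j:ℝ)+1)*τ₀) := by
        have hj : (((Equiv.neg ℤ) j : ℤ):ℝ) = -(j:ℝ) := by
          simp [Equiv.neg_apply]
        rw [hj]
        congr 1 <;> ring
      rw [hs]
    rw [tsum_congr hconv]
    rw [← MeasureTheory.integral_iUnion (fun _ => measurableSet_Ioc) (disj_Ioc hτ₀)
      (by rw [iUnion_Ioc_mul hτ₀]; exact hWint.integrableOn)]
    rw [iUnion_Ioc_mul hτ₀, Measure.restrict_univ]
  -- LHS rewriting
  have hpivot1 : (∫ x in Set.Ioc (0:ℝ) (2*Real.pi) ×ˢ (Set.univ : Set ℝ), G x)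
      = ∫ φ in Set.Ioc (0:ℝ) (2*Real.pi), ∫ z : ℝ, G (φ, z) :=
    strip_int G _ hIocInt
  have hpivot2 : (∫ x in Set.Ioc (0:ℝ) (2*Real.pi) ×ˢ (Set.univ : Set ℝ), G x)
      = ∫ u : ℝ, Wf G u := by
    have h := strip_int_symm G (Set.Ioc (0:ℝ) (2*Real.pi)) hIocInt
    exact h
  have hae2π : ∀ᵐ φ : ℝ, φ ≠ 2*Real.pi := by
    rw [MeasureTheory.ae_iff]
    have : {φ : ℝ | ¬ φ ≠ 2*Real.pi} = {2*Real.pi} := by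
      ext φ; simp
    rw [this]
    exact Real.volume_singleton
  have hLHS : (∫ φ in (0:ℝ)..(2*Real.pi), ∫ z : ℝ,
        ψ φ z * Complex.exp (-Complex.I * (((q.1 : ℝ) * φ + q.2 * z : ℝ) : ℂ)))
      = ∫ φ in Set.Ioc (0:ℝ) (2*Real.pi), ∫ z : ℝ, G (φ, z) := by
    rw [intervalIntegral.integral_of_le h2π.le]
    apply MeasureTheory.setIntegral_congr_ae measurableSet_Ioc
    filter_upwards [hae2π] with φ hφ hmem
    have hφIco : φ ∈ Set.Ico (0:ℝ) (2*Real.pi) := ⟨hmem.1.le, lt_of_le_of_ne hmem.2 hφ⟩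
    apply MeasureTheory.integral_congr_ae
    filter_upwards with z
    show ψ φ z * Complex.exp (-Complex.I * (((q.1 : ℝ) * φ + q.2 * z : ℝ) : ℂ)) = G (φ, z)
    rw [hG]
    unfold Gf ecf
    rw [show mod2pi ((φ, z).1) = φ from by
      show mod2pi φ = φ
      exact mod2pi_eq_self hφIco]
  -- assembling everything
  calc (∫ φ in (0:ℝ)..(2*Real.pi), ∫ z : ℝ,
        ψ φ z * Complex.exp (-Complex.I * (((q.1 : ℝ) * φ + q.2 * z : ℝ) : ℂ)))
      = ∫ φ in Set.Ioc (0:ℝ) (2*Real.pi), ∫ z : ℝ, G (φ, z) := hLHS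
    _ = ∫ x in Set.Ioc (0:ℝ) (2*Real.pi) ×ˢ (Set.univ : Set ℝ), G x := hpivot1.symm
    _ = ∫ u : ℝ, Wf G u := hpivot2
    _ = ∑' j : ℤ, ∫ u in (0 - τ₀*(j:ℝ))..(τ₀ - τ₀*(j:ℝ)), Wf G u := hRHS5.symm
    _ = ∑' j : ℤ, ∑ i : Fin n, ∫ x in Ucell θ₀ τ₀ n, G (x - v (i, j)) :=
        (tsum_congr fun j => (hRHS4 j).symm)
    _ = ∑' p : Fin n × ℤ, ∫ x in Ucell θ₀ τ₀ n, G (x - v p) := hRHS3.symm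
    _ = ∫ x in Ucell θ₀ τ₀ n, ∑' p : Fin n × ℤ, G (x - v p) := hRHS2.symm
    _ = ∫ x in Ucell θ₀ τ₀ n,
          ρ x.1 x.2 * Complex.exp (-Complex.I * (((q.1 : ℝ) * x.1 + q.2 * x.2 : ℝ) : ℂ)) :=
        hRHS1.symm
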